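/- For every x ≥ 4, one has 2x/√(1 + x²) < ln(√(1 + x²) + x). Consequently, the function f_ub(x) = (ln(√(1 + x²) + x))² / x is strictly decreasing on [4, ∞). -/

import Mathlib

lemma key_ineq (x : ℝ) (hx : 4 ≤ x) :
    2 * x / Real.sqrt (1 + x ^ 2) < Real.log (Real.sqrt (1 + x ^ 2) + x) := by
  have hx0 : (0:ℝ) < x := by linarith
  have hs0 : (0:ℝ) < Real.sqrt (1 + x ^ 2) := Real.sqrt_pos.2 (by positivity)
  have hxs : x < Real.sqrt (1 + x ^ 2) := by
    nlinarith [Real.sq_sqrt (show (0:ℝ) ≤ 1 + x^2 by positivity),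
      Real.sqrt_nonneg (1 + x^2)]
  have h1 : 2 * x / Real.sqrt (1 + x ^ 2) < 2 := by
    rw [div_lt_iff₀ hs0]; linarith
  have h2 : (2:ℝ) < Real.log (Real.sqrt (1 + x ^ 2) + x) := by
    rw [Real.lt_log_iff_exp_lt (by linarith)]
    have he : Real.exp 1 < 2.7182818286 := Real.exp_one_lt_d9
    have he0 : (0:ℝ) < Real.exp 1 := Real.exp_pos 1
    have : Real.exp 2 = Real.exp 1 * Real.exp 1 := by
      rw [← Real.exp_add]; norm_num
    nlinarith
  linarith

lemma hasDeriv_f (x : ℝ) (hx : 4 ≤ x) :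
    HasDerivAt (fun x : ℝ => (Real.log (Real.sqrt (1 + x ^ 2) + x)) ^ 2 / x)
      ((2 * (Real.log (Real.sqrt (1 + x ^ 2) + x)) ^ 1 *
          ((x / Real.sqrt (1 + x ^ 2) + 1) / (Real.sqrt (1 + x ^ 2) + x)) * x
        - (Real.log (Real.sqrt (1 + x ^ 2) + x)) ^ 2 * 1) / x ^ 2) x := by
  have hx0 : (0:ℝ) < x := by linarith
  have hs0 : (0:ℝ) < Real.sqrt (1 + x ^ 2) := Real.sqrt_pos.2 (by positivity)
  have hg0 : (0:ℝ) < Real.sqrt (1 + x ^ 2) + x := by linarith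
  have h1 : HasDerivAt (fun y : ℝ => 1 + y ^ 2) (2 * x) x := by
    simpa using (hasDerivAt_pow 2 x).const_add 1
  have hs : HasDerivAt (fun y : ℝ => Real.sqrt (1 + y ^ 2))
      (x / Real.sqrt (1 + x ^ 2)) x := by
    have := (Real.hasDerivAt_sqrt (by positivity : (1:ℝ) + x ^ 2 ≠ 0)).comp x h1
    refine this.congr_deriv ?_
    rw [eq_comm, one_div, ← div_eq_inv_mul, mul_div_mul_left _ _ (two_ne_zero)]
  have hg : HasDerivAt (fun y : ℝ => Real.sqrt (1 + y ^ 2) + y)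
      (x / Real.sqrt (1 + x ^ 2) + 1) x := hs.add (hasDerivAt_id x)
  have hlog := hg.log hg0.ne'
  have hsq := hlog.pow 2
  have hdiv := hsq.div (hasDerivAt_id x) hx0.ne'
  simp at hdiv ⊢
  exact hdiv

lemma my_deriv_neg (x : ℝ) (hx : 4 ≤ x) :
    (2 * (Real.log (Real.sqrt (1 + x ^ 2) + x)) ^ 1 *
        ((x / Real.sqrt (1 + x ^ 2) + 1) / (Real.sqrt (1 + x ^ 2) + x)) * x
      - (Real.log (Real.sqrt (1 + x ^ 2) + x)) ^ 2 * 1) / x ^ 2 < 0 := by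
  have hx0 : (0:ℝ) < x := by linarith
  have hs0 : (0:ℝ) < Real.sqrt (1 + x ^ 2) := Real.sqrt_pos.2 (by positivity)
  have hg0 : (0:ℝ) < Real.sqrt (1 + x ^ 2) + x := by linarith
  set s := Real.sqrt (1 + x ^ 2) with hsdef
  set L := Real.log (s + x) with hLdef
  have hsimp : (x / s + 1) / (s + x) = 1 / s := by
    field_simp
    ring
  have hL0 : 0 < L := by
    have := key_ineq x hx
    have h1 : 0 < 2 * x / s := by positivity
    rw [hLdef]; linarith
  have hkey : 2 * x / s < L := key_ineq x hx
  apply div_neg_of_neg_of_pos _ (by positivity)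
  rw [hsimp]
  have : 2 * L ^ 1 * (1 / s) * x = L * (2 * x / s) := by ring
  rw [this]
  nlinarith

/-- For `x ≥ 4`, `2x/√(1+x²) < ln(√(1+x²)+x)`; consequently
`f_ub(x) = (ln(√(1+x²)+x))²/x` is strictly decreasing on `[4, ∞)`. -/
theorem f_ub_strictAntiOn :
    (∀ x : ℝ, 4 ≤ x →
        2 * x / Real.sqrt (1 + x ^ 2) < Real.log (Real.sqrt (1 + x ^ 2) + x)) ∧
      StrictAntiOn (fun x : ℝ => (Real.log (Real.sqrt (1 + x ^ 2) + x)) ^ 2 / x)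
        (Set.Ici 4) := by
  refine ⟨key_ineq, ?_⟩
  apply strictAntiOn_of_deriv_neg (convex_Ici 4)
  · exact fun x hx => (hasDeriv_f x hx).continuousAt.continuousWithinAt
  · intro x hx
    rw [interior_Ici] at hx
    have hx4 : (4:ℝ) ≤ x := le_of_lt hx
    rw [(hasDeriv_f x hx4).deriv]
    exact my_deriv_neg x hx4
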